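/- Let g>0, θ∈ℝ, γ>1, k>0, ρ₀>0 be constants, S, Z : ℝ→ℝ C¹ functions, and I₁, I₂, h_w C¹ functions. Suppose M, D, A, Q : ℝ×ℝ→ℝ are C¹ with M>0, A>0, S−A>0 and solve the full two-layer system: ∂ₜM+∂ₓD=0; ∂ₜD+∂ₓ(D²/M + M c_a²/γ) = (M c_a²/(γ(S−A)))·∂ₓ(S−A); ∂ₜA+∂ₓQ=0; ∂ₜQ+∂ₓ( Q²/A + g I₁ cosθ + A·M c_a²/(γ(S−A)) ) = −gA∂ₓZ + g I₂ cosθ + (M c_a²/(γ(S−A)))·∂ₓA, where c_a² = kγ(ρ₀M/(S−A))^{γ−1}; assume the geometric identities ∂ₓ[I₁] = I₂ + A ∂ₓ[h_w] and ∂ₜ[A h_w − I₁] = h_w ∂ₜA. Define the total energy E = E_a + E_w with E_a = M v²/2 + c_a² M/(γ(γ−1)), E_w = A u²/2 + g(A h_w − I₁)cosθ + gAZ (v=D/M, u=Q/A), and the total entropy flux H = H_a + H_w with H_a = (E_a + c_a² M/γ)v and H_w = (E_w + g I₁ cosθ + A·M c_a²/(γ(S−A)))u. Then the entropy equality ∂ₜE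 + ∂ₓH = 0 holds. -/

import Mathlib

open Real MeasureTheory

/-- Partial derivative with respect to the first (time) variable. -/
noncomputable def pt (f : ℝ → ℝ → ℝ) (t x : ℝ) : ℝ := deriv (fun s => f s x) t

/-- Partial derivative with respect to the second (space) variable. -/
noncomputable def px (f : ℝ → ℝ → ℝ) (t x : ℝ) : ℝ := deriv (fun y => f t y) x

private lemma sliceX {f : ℝ → ℝ → ℝ} (hf : ContDiff ℝ 1 (Function.uncurry f)) (t x : ℝ) :
    HasDerivAt (fun y => f t y) (px f t x) x := by
  have h : DifferentiableAt ℝ (fun y => f t y) x := by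
    have h1 : DifferentiableAt ℝ (Function.uncurry f) (t, x) :=
      (hf.differentiable one_ne_zero).differentiableAt
    exact h1.comp x ((differentiableAt_const t).prodMk differentiableAt_id)
  exact h.hasDerivAt

private lemma sliceT {f : ℝ → ℝ → ℝ} (hf : ContDiff ℝ 1 (Function.uncurry f)) (t x : ℝ) :
    HasDerivAt (fun s => f s x) (pt f t x) t := by
  have h : DifferentiableAt ℝ (fun s => f s x) t := by
    have h1 : DifferentiableAt ℝ (Function.uncurry f) (t, x) :=
      (hf.differentiable one_ne_zero).differentiableAt
    exact h1.comp t ((differentiableAt_id (𝕜 := ℝ) (x := t)).prodMk (differentiableAt_const x))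
  exact h.hasDerivAt

set_option maxHeartbeats 8000000 in
/-- for C¹ solutions of the full two-layer system (with the two
geometric identities), the total energy `E = E_a + E_w` and the total entropy
flux `H = H_a + H_w` satisfy the entropy equality `∂ₜ E + ∂ₓ H = 0`. -/
theorem total_energy_equality
    (g θ γ k ρ₀ : ℝ) (hg : 0 < g) (hγ : 1 < γ) (hk : 0 < k) (hρ₀ : 0 < ρ₀)
    (S Z : ℝ → ℝ) (hSreg : ContDiff ℝ 1 S) (hZreg : ContDiff ℝ 1 Z)
    (I₁ I₂ hw : ℝ → ℝ → ℝ)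
    (hI₁reg : ContDiff ℝ 1 (Function.uncurry I₁))
    (hI₂reg : ContDiff ℝ 1 (Function.uncurry I₂))
    (hhwreg : ContDiff ℝ 1 (Function.uncurry hw))
    (M D A Q : ℝ → ℝ → ℝ)
    (hMreg : ContDiff ℝ 1 (Function.uncurry M))
    (hDreg : ContDiff ℝ 1 (Function.uncurry D))
    (hAreg : ContDiff ℝ 1 (Function.uncurry A))
    (hQreg : ContDiff ℝ 1 (Function.uncurry Q))
    (hMpos : ∀ t x, 0 < M t x) (hApos : ∀ t x, 0 < A t x)
    (hSA : ∀ t x, 0 < S x - A t x)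
    (ca2 : ℝ → ℝ → ℝ)
    (hca2 : ∀ t x, ca2 t x = k * γ * (ρ₀ * M t x / (S x - A t x)) ^ (γ - 1))
    (hmassAir : ∀ t x, pt M t x + px D t x = 0)
    (hmomAir : ∀ t x,
      pt D t x + px (fun t x => D t x ^ 2 / M t x + M t x * ca2 t x / γ) t x
        = M t x * ca2 t x / (γ * (S x - A t x)) * px (fun t x => S x - A t x) t x)
    (hmassWater : ∀ t x, pt A t x + px Q t x = 0)
    (hmomWater : ∀ t x,
      pt Q t x + px (fun t x => Q t x ^ 2 / A t x + g * I₁ t x * Real.cos θ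
          + A t x * (M t x * ca2 t x / (γ * (S x - A t x)))) t x
        = -g * A t x * deriv Z x + g * I₂ t x * Real.cos θ
          + M t x * ca2 t x / (γ * (S x - A t x)) * px A t x)
    (hLeibnizX : ∀ t x, px I₁ t x = I₂ t x + A t x * px hw t x)
    (hLeibnizT : ∀ t x,
      pt (fun t x => A t x * hw t x - I₁ t x) t x = hw t x * pt A t x)
    (v u : ℝ → ℝ → ℝ)
    (hv : ∀ t x, v t x = D t x / M t x)
    (hu : ∀ t x, u t x = Q t x / A t x)
    (Ea Ew E Ha Hw H : ℝ → ℝ → ℝ)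
    (hEa : ∀ t x, Ea t x = M t x * v t x ^ 2 / 2
        + ca2 t x * M t x / (γ * (γ - 1)))
    (hEw : ∀ t x, Ew t x = A t x * u t x ^ 2 / 2
        + g * (A t x * hw t x - I₁ t x) * Real.cos θ + g * A t x * Z x)
    (hE : ∀ t x, E t x = Ea t x + Ew t x)
    (hHa : ∀ t x, Ha t x = (Ea t x + ca2 t x * M t x / γ) * v t x)
    (hHw : ∀ t x, Hw t x = (Ew t x + g * I₁ t x * Real.cos θ
        + A t x * (M t x * ca2 t x / (γ * (S x - A t x)))) * u t x)
    (hH : ∀ t x, H t x = Ha t x + Hw t x) :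
    ∀ t x, pt E t x + px H t x = 0 := by
  intro t x
  have hγ0 : γ ≠ 0 := by positivity
  have hγ1 : γ - 1 ≠ 0 := ne_of_gt (by linarith)
  have hm0 : M t x ≠ 0 := (hMpos t x).ne'
  have ha0 : A t x ≠ 0 := (hApos t x).ne'
  have hs0 : S x - A t x ≠ 0 := (hSA t x).ne'
  have hψ0 : ρ₀ * M t x / (S x - A t x) ≠ 0 :=
    (div_pos (mul_pos hρ₀ (hMpos t x)) (hSA t x)).ne'
  -- base slice derivatives
  have hMx := sliceX hMreg t x
  have hDx := sliceX hDreg t x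
  have hAx := sliceX hAreg t x
  have hQx := sliceX hQreg t x
  have hI1x := sliceX hI₁reg t x
  have hhwx := sliceX hhwreg t x
  have hMt := sliceT hMreg t x
  have hDt := sliceT hDreg t x
  have hAt := sliceT hAreg t x
  have hQt := sliceT hQreg t x
  have hI1t := sliceT hI₁reg t x
  have hhwt := sliceT hhwreg t x
  have hSx : HasDerivAt S (deriv S x) x :=
    ((hSreg.differentiable one_ne_zero).differentiableAt).hasDerivAt
  have hZx : HasDerivAt Z (deriv Z x) x :=
    ((hZreg.differentiable one_ne_zero).differentiableAt).hasDerivAt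
  -- sigma and Pi slices
  have hσx : HasDerivAt (fun y => S y - A t y) (deriv S x - px A t x) x := hSx.sub hAx
  have hσt : HasDerivAt (fun s => S x - A s x) (0 - pt A t x) t :=
    (hasDerivAt_const t (S x)).sub hAt
  have hψx := ((hMx.const_mul ρ₀).div hσx hs0)
  have hWx := hψx.rpow_const (p := γ - 1) (Or.inl hψ0)
  have hPix := (hMx.const_mul k).mul hWx
  have hψt := ((hMt.const_mul ρ₀).div hσt hs0)
  have hWt := hψt.rpow_const (p := γ - 1) (Or.inl hψ0)
  have hPit := (hMt.const_mul k).mul hWt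
  -- composite for air momentum flux
  have heqF : (fun y => D t y ^ 2 / M t y + M t y * ca2 t y / γ) =ᶠ[nhds x]
      (fun y => D t y * D t y / M t y
        + k * M t y * (ρ₀ * M t y / (S y - A t y)) ^ (γ - 1)) := by
    refine Filter.Eventually.of_forall fun y => ?_
    beta_reduce
    rw [hca2 t y]
    field_simp
  have hFx := (((hDx.mul hDx).div hMx hm0).add hPix).congr_of_eventuallyEq heqF
  -- composite for water momentum flux
  have heqG : (fun y => Q t y ^ 2 / A t y + g * I₁ t y * Real.cos θ
        + A t y * (M t y * ca2 t y / (γ * (S y - A t y)))) =ᶠ[nhds x]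
      (fun y => Q t y * Q t y / A t y + g * I₁ t y * Real.cos θ
        + A t y * (k * M t y * (ρ₀ * M t y / (S y - A t y)) ^ (γ - 1) / (S y - A t y))) := by
    refine Filter.Eventually.of_forall fun y => ?_
    beta_reduce
    have := (hSA t y).ne'
    rw [hca2 t y]
    field_simp
  have hGx := ((((hQx.mul hQx).div hAx ha0).add
      ((HasDerivAt.const_mul g hI1x).mul_const (Real.cos θ))).add
      (hAx.mul (hPix.div hσx hs0))).congr_of_eventuallyEq heqG
  -- E slice in t
  have heqE : (fun s => E s x) =ᶠ[nhds t]
      (fun s => D s x * D s x / (2 * M s x)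
        + k * M s x * (ρ₀ * M s x / (S x - A s x)) ^ (γ - 1) / (γ - 1)
        + Q s x * Q s x / (2 * A s x)
        + g * (A s x * hw s x - I₁ s x) * Real.cos θ
        + g * (A s x * Z x)) := by
    refine Filter.Eventually.of_forall fun s => ?_
    beta_reduce
    have h1 := (hMpos s x).ne'
    have h2 := (hApos s x).ne'
    have h3 := (hSA s x).ne'
    rw [hE, hEa, hEw, hv, hu, hca2]
    field_simp
    ring
  have hEt := ((((((hDt.mul hDt).div (HasDerivAt.const_mul 2 hMt) (by
      simpa using mul_ne_zero two_ne_zero hm0)).add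
      (hPit.div_const (γ - 1))).add
      ((hQt.mul hQt).div (HasDerivAt.const_mul 2 hAt) (by
      simpa using mul_ne_zero two_ne_zero ha0))).add
      (((HasDerivAt.const_mul g ((hAt.mul hhwt).sub hI1t)).mul_const (Real.cos θ)))).add
      (HasDerivAt.const_mul g (hAt.mul_const (Z x)))).congr_of_eventuallyEq heqE
  -- H slice in x
  have heqH : (fun y => H t y) =ᶠ[nhds x]
      (fun y => (D t y * D t y / (2 * M t y)
          + γ / (γ - 1) * (k * M t y * (ρ₀ * M t y / (S y - A t y)) ^ (γ - 1)))
          * (D t y / M t y)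
        + (Q t y * Q t y / (2 * A t y)
          + g * (A t y * hw t y) * Real.cos θ
          + g * (A t y * Z y)
          + A t y * (k * M t y * (ρ₀ * M t y / (S y - A t y)) ^ (γ - 1) / (S y - A t y)))
          * (Q t y / A t y)) := by
    refine Filter.Eventually.of_forall fun y => ?_
    beta_reduce
    have h1 := (hMpos t y).ne'
    have h2 := (hApos t y).ne'
    have h3 := (hSA t y).ne'
    rw [hH, hHa, hHw, hEa, hEw, hv, hu, hca2]
    field_simp
    ring
  have hHx := ((((hDx.mul hDx).div (HasDerivAt.const_mul 2 hMx) (by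
      simpa using mul_ne_zero two_ne_zero hm0)).add
      (HasDerivAt.const_mul (γ / (γ - 1)) hPix)).mul (hDx.div hMx hm0)).add
      ((((((hQx.mul hQx).div (HasDerivAt.const_mul 2 hAx) (by
      simpa using mul_ne_zero two_ne_zero ha0)).add
      ((HasDerivAt.const_mul g (hAx.mul hhwx)).mul_const (Real.cos θ))).add
      (HasDerivAt.const_mul g (hAx.mul hZx))).add
      (hAx.mul (hPix.div hσx hs0))).mul (hQx.div hAx ha0))
  have hHx' := hHx.congr_of_eventuallyEq heqH
  -- turn PDE hypotheses into scalar equations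
  have e1 := hmassAir t x
  have e3 := hmassWater t x
  have e2 := hmomAir t x
  have r2 : px (fun t x => D t x ^ 2 / M t x + M t x * ca2 t x / γ) t x = _ := hFx.deriv
  have rσ : px (fun t x => S x - A t x) t x = _ := hσx.deriv
  rw [r2, rσ, hca2 t x] at e2
  have e4 := hmomWater t x
  have r4 : px (fun t x => Q t x ^ 2 / A t x + g * I₁ t x * Real.cos θ
      + A t x * (M t x * ca2 t x / (γ * (S x - A t x)))) t x = _ := hGx.deriv
  rw [r4, hca2 t x] at e4
  have e5 := hLeibnizX t x
  have e6 := hLeibnizT t x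
  have r6 : pt (fun t x => A t x * hw t x - I₁ t x) t x = _ := ((hAt.mul hhwt).sub hI1t).deriv
  rw [r6] at e6
  -- goal
  show deriv (fun s => E s x) t + deriv (fun y => H t y) x = 0
  rw [hEt.deriv, hHx'.deriv]
  beta_reduce at e2 e4 ⊢
  simp only [Pi.div_apply, Pi.mul_apply, Pi.add_apply, Pi.sub_apply] at e2 e4 ⊢
  rw [show (ρ₀ * M t x / (S x - A t x)) ^ (γ - 1 - 1)
      = (ρ₀ * M t x / (S x - A t x)) ^ (γ - 1) / (ρ₀ * M t x / (S x - A t x)) from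
    Real.rpow_sub_one hψ0 (γ - 1)] at e2 e4 ⊢
  -- solve t-derivatives
  have hmt : pt M t x = -px D t x := by linarith
  have hat : pt A t x = -px Q t x := by linarith
  have hdt := eq_sub_of_add_eq e2
  have hqt := eq_sub_of_add_eq e4
  have hhwt' : pt hw t x = pt I₁ t x / A t x := by
    field_simp
    linear_combination e6
  rw [hmt, hat, hdt, hqt, hhwt', e5]
  set sg := S x - A t x with hsg
  set W := (ρ₀ * M t x / sg) ^ (γ - 1) with hWdef
  field_simp
  ring
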